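/- arXiv:2311.13872 — 2 statements merged into one kernel-verified Lean document; each statement's English description precedes it below -/
import Mathlib

section
/- Let μ, ν ∈ M₊(X) with μ(X) = ν(X). Then F(μ,ν) ≥ f( ∫_X x ⊗ x d(ν − μ)(x) ), i.e. F(μ,ν) is bounded below by f evaluated at the difference of the second-moment matrices of ν and μ. -/
open MeasureTheory Set Filter Topology
open scoped ENNReal NNReal Classical

noncomputable section

/-- Euclidean space `ℝ^d`. -/
abbrev Ed (d : ℕ) := EuclideanSpace ℝ (Fin d)

/-- The space `M_d` of real `d × d` matrices. -/
abbrev Matd (d : ℕ) := Matrix (Fin d) (Fin d) ℝ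

/-- The Frobenius inner product `A : B = tr(Aᵀ B)`. -/
def frob {d : ℕ} (A B : Matd d) : ℝ := ∑ i, ∑ j, A i j * B i j

/-- The Frobenius norm of a matrix. -/
def matnorm {d : ℕ} (A : Matd d) : ℝ := Real.sqrt (frob A A)

/-- The Hessian matrix `∇²φ(x)`. -/
def hess {d : ℕ} (φ : Ed d → ℝ) (x : Ed d) : Matd d :=
  fun i j => iteratedFDeriv ℝ 2 φ x ![EuclideanSpace.single i 1, EuclideanSpace.single j 1]

/-- `φ ∈ C²_c(ℝ^d)`. -/
def IsC2c {d : ℕ} (φ : Ed d → ℝ) : Prop := ContDiff ℝ 2 φ ∧ HasCompactSupport φ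

/-- Assumption (A1): `dom f ⊆ S⁺_d`, `f` is coercive and sublinear
(subadditive and positively 1-homogeneous). -/
def CostA1 {d : ℕ} (f : Matd d → ℝ≥0∞) : Prop :=
  (∀ M, f M ≠ ⊤ → M.PosSemidef) ∧
  (∃ c : ℝ, 0 < c ∧ ∀ M, ENNReal.ofReal (c * matnorm M) ≤ f M) ∧
  (∀ A B, f (A + B) ≤ f A + f B) ∧
  (∀ t : ℝ, 0 ≤ t → ∀ A, f (t • A) = ENNReal.ofReal t * f A)

/-- Assumption (A2): `f` is lower semicontinuous. -/
def CostA2 {d : ℕ} (f : Matd d → ℝ≥0∞) : Prop := LowerSemicontinuous f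

/-- `dom(f⋆) = {A | A : M ≤ f(M) for all M ∈ dom f}`. -/
def domFstar {d : ℕ} (f : Matd d → ℝ≥0∞) : Set (Matd d) :=
  { A | ∀ M, f M ≠ ⊤ → ENNReal.ofReal (frob A M) ≤ f M }

/-- A competitor `λ = ρ·m` (an `S⁺_d`-valued measure supported in `X`) for the static problem:
`tr(½∇²λ) = ν − μ` in the distributional sense. -/
def IsStaticCompetitor {d : ℕ} (X : Set (Ed d)) (μ ν : Measure (Ed d))
    (m : Measure (Ed d)) (ρ : Ed d → Matd d) : Prop :=
  IsFiniteMeasure m ∧ m Xᶜ = 0 ∧ (∀ x, (ρ x).PosSemidef) ∧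
    ∀ φ : Ed d → ℝ, IsC2c φ →
      ∫ x, (1/2 : ℝ) * frob (hess φ x) (ρ x) ∂m = ∫ x, φ x ∂ν - ∫ x, φ x ∂μ

/-- The static value `F(μ,ν)` (using the positive 1-homogeneity of `f`, the cost of
`λ = ρ·m` is `∫ f(dλ/d|λ|) d|λ| = ∫ f(ρ) dm`). -/
def Fstat {d : ℕ} (f : Matd d → ℝ≥0∞) (X : Set (Ed d)) (μ ν : Measure (Ed d)) : ℝ≥0∞ :=
  sInf { c | ∃ m ρ, IsStaticCompetitor X μ ν m ρ ∧ c = ∫⁻ x, f (ρ x) ∂m }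

/-- `(ϱ, λ)`, with `ϱ = ϱ_t ⊗ L¹⌞(0,1)` and `λ = (ρ_t · m_t) ⊗ L¹⌞(0,1)` an `S⁺_d`-valued
measure, solves the Fokker–Planck equation `∂_t ϱ = tr(½∇²λ)` on `(0,1) × ℝ^d`. -/
def SolvesFPE {d : ℕ} (ϱ : ℝ → Measure (Ed d)) (m : ℝ → Measure (Ed d))
    (ρ : ℝ → Ed d → Matd d) : Prop :=
  (∀ t ∈ Ioo (0:ℝ) 1, IsFiniteMeasure (ϱ t) ∧ IsFiniteMeasure (m t)) ∧
  (∀ t ∈ Ioo (0:ℝ) 1, ∀ x, (ρ t x).PosSemidef) ∧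
  (∀ A : Set (Ed d), IsCompact A →
    (∫⁻ t in Ioo (0:ℝ) 1, ∫⁻ x in A, ENNReal.ofReal (matnorm (ρ t x)) ∂(m t)) < ⊤) ∧
  (∀ φ : ℝ × Ed d → ℝ, ContDiff ℝ 2 φ → HasCompactSupport φ →
    tsupport φ ⊆ Ioo (0:ℝ) 1 ×ˢ (univ : Set (Ed d)) →
    (∫ t in Ioo (0:ℝ) 1, ∫ x, fderiv ℝ φ (t, x) (1, 0) ∂(ϱ t)) =
      - ∫ t in Ioo (0:ℝ) 1, ∫ x, (1/2 : ℝ) * frob (hess (fun y => φ (t, y)) x) (ρ t x) ∂(m t))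

/-- The support condition (⋆): `supp ϱ_t, supp λ_t ⊆ X` for a.e. `t ∈ (0,1)`. -/
def SuppCond {d : ℕ} (X : Set (Ed d)) (ϱ m : ℝ → Measure (Ed d)) : Prop :=
  ∀ᵐ t ∂(volume.restrict (Ioo (0:ℝ) 1)), (ϱ t) Xᶜ = 0 ∧ (m t) Xᶜ = 0

/-- `μ` is the weak* (narrow) limit of `ϱ_t` as `t → t₀` within `(0,1)`. -/
def NarrowLim {d : ℕ} (ϱ : ℝ → Measure (Ed d)) (t₀ : ℝ) (μ : Measure (Ed d)) : Prop :=
  ∀ g : BoundedContinuousFunction (Ed d) ℝ,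
    Tendsto (fun t => ∫ x, g x ∂(ϱ t)) (𝓝[Ioo (0:ℝ) 1] t₀) (𝓝 (∫ x, g x ∂μ))

/-- The dynamic (Benamou–Brenier type) value `F(μ,ν)`. -/
def Fdyn {d : ℕ} (f : Matd d → ℝ≥0∞) (X : Set (Ed d)) (μ ν : Measure (Ed d)) : ℝ≥0∞ :=
  sInf { c | ∃ ϱ m ρ, SolvesFPE ϱ m ρ ∧ SuppCond X ϱ m ∧
      NarrowLim ϱ 0 μ ∧ NarrowLim ϱ 1 ν ∧
      c = ∫⁻ t in Ioo (0:ℝ) 1, ∫⁻ x, f (ρ t x) ∂(m t) }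

/-- the cost `G(x,p) := F(δ_x, p)`. -/
def Gcost {d : ℕ} (f : Matd d → ℝ≥0∞) (X : Set (Ed d)) (x : Ed d)
    (p : Measure (Ed d)) : ℝ≥0∞ :=
  Fstat f X (Measure.dirac x) p

/-- A disintegration kernel `x ↦ γ^x` of a transport plan `γ ∈ Π(μ,ν)`. -/
def IsTransportKernel {d : ℕ} (X : Set (Ed d)) (μ ν : Measure (Ed d))
    (κ : Ed d → Measure (Ed d)) : Prop :=
  (∀ x, IsProbabilityMeasure (κ x) ∧ (κ x) Xᶜ = 0) ∧
  (∀ A : Set (Ed d), MeasurableSet A → Measurable fun x => κ x A) ∧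
  (∀ A : Set (Ed d), MeasurableSet A → ∫⁻ x, κ x A ∂μ = ν A)

/-- The static optimal transport value `H(μ,ν) = inf_{γ ∈ Π(μ,ν)} ∫ G(x,γ^x) dμ`. -/
def Hcost {d : ℕ} (f : Matd d → ℝ≥0∞) (X : Set (Ed d)) (μ ν : Measure (Ed d)) : ℝ≥0∞ :=
  sInf { c | ∃ κ, IsTransportKernel X μ ν κ ∧ c = ∫⁻ x, Gcost f X x (κ x) ∂μ }

/-- Integral of `φ` against a signed measure. -/
def sInt {d : ℕ} (s : SignedMeasure (Ed d)) (φ : Ed d → ℝ) : ℝ :=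
  ∫ x, φ x ∂s.toJordanDecomposition.posPart - ∫ x, φ x ∂s.toJordanDecomposition.negPart

/-- A signed measure is supported in `X`. -/
def SuppInX {d : ℕ} (X : Set (Ed d)) (s : SignedMeasure (Ed d)) : Prop :=
  ∀ A : Set (Ed d), MeasurableSet A → A ⊆ Xᶜ → s A = 0

/-- The extension of `F` to signed measures: `+∞` unless `μ, ν ≥ 0` with equal masses. -/
def FSgn {d : ℕ} (f : Matd d → ℝ≥0∞) (X : Set (Ed d)) (μ ν : SignedMeasure (Ed d)) : ℝ≥0∞ :=
  if 0 ≤ μ ∧ 0 ≤ ν ∧ μ univ = ν univ then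
    Fstat f X μ.toJordanDecomposition.posPart ν.toJordanDecomposition.posPart
  else ⊤

/-- The extension of `H` to signed measures: `+∞` unless `μ, ν ≥ 0` with equal masses. -/
def HSgn {d : ℕ} (f : Matd d → ℝ≥0∞) (X : Set (Ed d)) (μ ν : SignedMeasure (Ed d)) : ℝ≥0∞ :=
  if 0 ≤ μ ∧ 0 ≤ ν ∧ μ univ = ν univ then
    Hcost f X μ.toJordanDecomposition.posPart ν.toJordanDecomposition.posPart
  else ⊤

/-- The weak* topology on signed measures, in duality with continuous functions. -/
def weakStarTop (d : ℕ) : TopologicalSpace (SignedMeasure (Ed d)) :=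
  ⨅ g : C(Ed d, ℝ), TopologicalSpace.induced (fun s => sInt s g) inferInstance

/-- The `G`-transform `φ^G(x) = inf { ∫ φ dp + G(x,p) : p ∈ P(X) }`. -/
def GTrans {d : ℕ} (f : Matd d → ℝ≥0∞) (X : Set (Ed d)) (φ : Ed d → ℝ) (x : Ed d) : EReal :=
  sInf { c : EReal | ∃ p : Measure (Ed d), IsProbabilityMeasure p ∧ p Xᶜ = 0 ∧
      c = ((∫ y, φ y ∂p : ℝ) : EReal) + (Gcost f X x p : EReal) }

/-- `φ = φ^G` on `E`. -/
def GEq {d : ℕ} (f : Matd d → ℝ≥0∞) (X : Set (Ed d)) (φ : Ed d → ℝ) (E : Set (Ed d)) : Prop :=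
  ∀ x ∈ E, GTrans f X φ x = ((φ x : ℝ) : EReal)

/-- `𝒯(A) = sup { A : M | M ∈ S⁺⁺_d, f(M) = 1 }`. -/
def Tcal {d : ℕ} (f : Matd d → ℝ≥0∞) (A : Matd d) : EReal :=
  sSup { c : EReal | ∃ M : Matd d, M.PosDef ∧ f M = 1 ∧ c = ((frob A M : ℝ) : EReal) }

/-- `u` is a viscosity supersolution of `c − 𝒯(½∇²u) = 0` in `U`. -/
def IsViscSupersol {d : ℕ} (f : Matd d → ℝ≥0∞) (c : ℝ) (u : Ed d → ℝ) (U : Set (Ed d)) : Prop :=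
  ∀ φ : Ed d → ℝ, ContDiffOn ℝ 2 φ U → ∀ x ∈ U,
    IsLocalMinOn (fun y => u y - φ y) U x →
    Tcal f ((1/2 : ℝ) • hess φ x) ≤ ((c : ℝ) : EReal)

/-- Integral of an `EReal`-valued function against a measure
(positive part minus negative part). -/
def erealInt {d : ℕ} (m : Measure (Ed d)) (u : Ed d → EReal) : EReal :=
  ((∫⁻ y, ENNReal.ofReal ((u y).toReal) ∂m : ℝ≥0∞) : EReal) -
    ((∫⁻ y, (if u y = ⊥ then (⊤ : ℝ≥0∞) else ENNReal.ofReal (-(u y).toReal)) ∂m : ℝ≥0∞) : EReal)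

/-- `u : U → ℝ ∪ {−∞}` is subharmonic on the open set `U`: it is upper semicontinuous,
not identically `−∞` on any connected component, and satisfies the sub-mean value
inequality on spheres. -/
def Subharmonic {d : ℕ} (U : Set (Ed d)) (u : Ed d → EReal) : Prop :=
  (∀ x, u x ≠ ⊤) ∧
  (∀ x ∈ U, ∃ y ∈ connectedComponentIn U x, u y ≠ ⊥) ∧
  UpperSemicontinuousOn u U ∧
  (∀ x ∈ U, ∀ r : ℝ, 0 < r → Metric.closedBall x r ⊆ U →
    (((μH[(d : ℝ) - 1] (Metric.sphere x r)).toReal : ℝ) : EReal) * u x ≤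
      erealInt ((μH[(d : ℝ) - 1]).restrict (Metric.sphere x r)) u)

/-- The (topological) support of a measure. -/
def msupp {d : ℕ} (m : Measure (Ed d)) : Set (Ed d) :=
  { x | ∀ U : Set (Ed d), IsOpen U → x ∈ U → m U ≠ 0 }

/-- `m₁ ≤_SH m₂`: subharmonic order. -/
def SHOrder {d : ℕ} (m₁ m₂ : Measure (Ed d)) : Prop :=
  ∀ U : Set (Ed d), IsOpen U → msupp (m₁ + m₂) ⊆ U →
    ∀ u : Ed d → EReal, Subharmonic U u →
      erealInt (m₁.restrict U) u ≤ erealInt (m₂.restrict U) u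

/-- The second moment matrix `∫ x ⊗ x dκ`. -/
def secondMoment {d : ℕ} (κ : Measure (Ed d)) : Matd d :=
  fun i j => ∫ x, x i * x j ∂κ

end

-- ===================== Auxiliary lemmas =====================

noncomputable section AuxStmt5

set_option synthInstance.maxHeartbeats 1000000
set_option maxHeartbeats 1000000

variable {d : ℕ}

lemma frob_zero_left (M : Matd d) : frob 0 M = 0 := by
  simp [frob]

lemma frob_smul_left (c : ℝ) (A M : Matd d) : frob (c • A) M = c * frob A M := by
  simp [frob, Finset.mul_sum, mul_assoc]

lemma f_zero {f : Matd d → ℝ≥0∞} (hA1 : CostA1 f) : f 0 = 0 := by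
  have h := hA1.2.2.2 0 le_rfl 0
  simpa using h

lemma zero_mem_domFstar {f : Matd d → ℝ≥0∞} : (0 : Matd d) ∈ domFstar f := by
  intro M _
  simp [frob_zero_left]

/-- Fenchel-type separation: any level strictly below `f N` is beaten by some
`A ∈ domFstar f`. -/
lemma exists_domFstar_gt {f : Matd d → ℝ≥0∞} (hA1 : CostA1 f) (hA2 : CostA2 f)
    (N : Matd d) (r : ℝ) (hr : ENNReal.ofReal r < f N) :
    ∃ A ∈ domFstar f, r < frob A N := by
  rcases lt_or_ge r 0 with hr0 | hr0
  · exact ⟨0, zero_mem_domFstar, by simpa [frob_zero_left] using hr0⟩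
  -- work in W
  set W := EuclideanSpace ℝ (Fin d × Fin d) × ℝ
  let mat : EuclideanSpace ℝ (Fin d × Fin d) → Matd d := fun y => Matrix.of fun i j => y (i, j)
  have hmat_cont : Continuous mat := by
    apply continuous_matrix
    intro i j
    exact (EuclideanSpace.proj ((i, j) : Fin d × Fin d)).continuous
  let emb : Matd d → EuclideanSpace ℝ (Fin d × Fin d) := fun M => WithLp.toLp 2 (fun p : Fin d × Fin d => M p.1 p.2)
  have hmatemb : ∀ M, mat (emb M) = M := fun M => rfl
  set S : Set W := {w | 0 ≤ w.2 ∧ f (mat w.1) ≤ ENNReal.ofReal w.2} with hS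
  have hmat_lin : ∀ (a b : ℝ) (y z : EuclideanSpace ℝ (Fin d × Fin d)),
      mat (a • y + b • z) = a • mat y + b • mat z := by
    intro a b y z
    ext i j
    simp [mat, Matrix.add_apply, Matrix.smul_apply]
  have hconv : Convex ℝ S := by
    rintro ⟨y1, t1⟩ ⟨h1t, h1f⟩ ⟨y2, t2⟩ ⟨h2t, h2f⟩ a b ha hb hab
    constructor
    · have : (0:ℝ) ≤ a * t1 + b * t2 := by positivity
      exact this
    · show f (mat (a • y1 + b • y2)) ≤ ENNReal.ofReal (a * t1 + b * t2)
      rw [hmat_lin]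
      calc f (a • mat y1 + b • mat y2) ≤ f (a • mat y1) + f (b • mat y2) :=
            hA1.2.2.1 _ _
        _ = ENNReal.ofReal a * f (mat y1) + ENNReal.ofReal b * f (mat y2) := by
            rw [hA1.2.2.2 a ha, hA1.2.2.2 b hb]
        _ ≤ ENNReal.ofReal a * ENNReal.ofReal t1 + ENNReal.ofReal b * ENNReal.ofReal t2 := by
            gcongr
        _ = ENNReal.ofReal (a * t1 + b * t2) := by
            rw [← ENNReal.ofReal_mul ha, ← ENNReal.ofReal_mul hb,
              ← ENNReal.ofReal_add (by positivity) (by positivity)]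
  have hclosed : IsClosed S := by
    have h1 : IsClosed {w : W | 0 ≤ w.2} := isClosed_le continuous_const continuous_snd
    have h2 : IsClosed {w : W | f (mat w.1) ≤ ENNReal.ofReal w.2} := by
      rw [← isOpen_compl_iff]
      rw [isOpen_iff_mem_nhds]
      intro w hw
      simp only [mem_compl_iff, mem_setOf_eq, not_le] at hw
      obtain ⟨c, hc1, hc2⟩ := exists_between hw
      have hev1 : ∀ᶠ w' : W in 𝓝 w, c < f (mat w'.1) := by
        have := hA2 (mat w.1) c hc2
        have hc : ContinuousAt (fun w' : W => mat w'.1) w :=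
          (hmat_cont.comp continuous_fst).continuousAt
        exact hc.eventually this
      have hev2 : ∀ᶠ w' : W in 𝓝 w, ENNReal.ofReal w'.2 < c := by
        have hopen : IsOpen {w' : W | ENNReal.ofReal w'.2 < c} :=
          isOpen_lt (ENNReal.continuous_ofReal.comp continuous_snd) continuous_const
        exact hopen.mem_nhds hc1
      filter_upwards [hev1, hev2] with w' h1' h2'
      simp only [mem_compl_iff, mem_setOf_eq, not_le]
      exact h2'.trans h1'
    have : S = {w : W | 0 ≤ w.2} ∩ {w : W | f (mat w.1) ≤ ENNReal.ofReal w.2} := by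
      ext w; exact ⟨fun h => ⟨h.1, h.2⟩, fun h => ⟨h.1, h.2⟩⟩
    rw [this]
    exact h1.inter h2
  have hmat0 : mat 0 = 0 := by ext i j; simp [mat]
  have hx : ((emb N, r) : W) ∉ S := by
    rintro ⟨-, h2⟩
    rw [hmatemb] at h2
    exact absurd h2 (not_le.mpr hr)
  obtain ⟨l, u, hl, hu⟩ := geometric_hahn_banach_closed_point hconv hclosed hx
  have hupos : 0 < u := by
    have h0 : ((0, 0) : W) ∈ S := by
      constructor
      · exact le_rfl
      · simp [hmat0, f_zero hA1]
    have := hl _ h0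
    rw [Prod.mk_zero_zero, map_zero] at this
    exact this
  -- scaling invariance of S
  have hscale : ∀ w ∈ S, ∀ c : ℝ, 0 ≤ c → c • w ∈ S := by
    rintro ⟨y, t⟩ ⟨h1, h2⟩ c hc
    constructor
    · exact mul_nonneg hc h1
    · show f (mat (c • y)) ≤ ENNReal.ofReal (c * t)
      have : mat (c • y) = c • mat y := by
        have := hmat_lin c 0 y 0
        simpa using this
      rw [this, hA1.2.2.2 c hc, ENNReal.ofReal_mul hc]
      exact mul_le_mul' le_rfl h2
  have hle0 : ∀ w ∈ S, l w ≤ 0 := by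
    intro w hw
    by_contra h
    push_neg at h
    have hc : (0:ℝ) ≤ u / l w := le_of_lt (div_pos hupos h)
    have := hl _ (hscale w hw _ hc)
    rw [_root_.map_smul] at this
    simp only [smul_eq_mul] at this
    rw [div_mul_cancel₀ u (ne_of_gt h)] at this
    exact lt_irrefl u this
  set s : ℝ := l (0, 1) with hs
  have hsle : s ≤ 0 := by
    have h01 : ((0, 1) : W) ∈ S := ⟨zero_le_one, by simp [hmat0, f_zero hA1]⟩
    exact hle0 _ h01
  -- linear functional on matrices
  set α : Matd d → ℝ := fun M => l (emb M, 0) with hα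
  have hemb_add : ∀ M M' : Matd d, emb (M + M') = emb M + emb M' := fun M M' => rfl
  have hemb_smul : ∀ (c : ℝ) (M : Matd d), emb (c • M) = c • emb M := fun c M => rfl
  have hl_split : ∀ (M : Matd d) (t : ℝ), l (emb M, t) = α M + t * s := by
    intro M t
    have : ((emb M, t) : W) = (emb M, 0) + t • ((0 : EuclideanSpace ℝ (Fin d × Fin d)), 1) := by
      simp
    rw [this, map_add, _root_.map_smul, smul_eq_mul]
  -- α as frob A
  set A : Matd d := Matrix.of fun i j => α (Matrix.single i j 1) with hA
  have hαlin : IsLinearMap ℝ α := by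
    constructor
    · intro M M'; simp only [hα, hemb_add]
      have : ((emb M + emb M', 0) : W) = (emb M, 0) + (emb M', 0) := by simp
      rw [this, map_add]
    · intro c M; simp only [hα, hemb_smul]
      have : ((c • emb M, 0) : W) = c • (emb M, 0) := by simp
      rw [this, _root_.map_smul, smul_eq_mul]
  have hαfrob : ∀ M : Matd d, frob A M = α M := by
    intro M
    set L := IsLinearMap.mk' α hαlin with hL
    have hrepr := Matrix.matrix_eq_sum_single M
    have key : α M = ∑ i, ∑ j, α (Matrix.single i j (M i j)) := by
      conv_lhs => rw [hrepr]
      rw [show α = ⇑L from rfl, map_sum]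
      exact Finset.sum_congr rfl fun i _ => map_sum L _ _
    rw [key]
    apply Finset.sum_congr rfl; intro i _
    apply Finset.sum_congr rfl; intro j _
    have : Matrix.single i j (M i j) = M i j • Matrix.single i j 1 := by
      rw [Matrix.smul_single, smul_eq_mul, mul_one]
    rw [this, hαlin.map_smul, smul_eq_mul]
    show α (Matrix.single i j 1) * M i j = _
    ring
  -- key inequality on the domain
  have hdom : ∀ M : Matd d, f M ≠ ⊤ → α M + (f M).toReal * s ≤ 0 := by
    intro M hM
    have hmem : ((emb M, (f M).toReal) : W) ∈ S := by
      refine ⟨ENNReal.toReal_nonneg, ?_⟩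
      show f (mat (emb M)) ≤ _
      rw [hmatemb, ENNReal.ofReal_toReal hM]
    have := hle0 _ hmem
    rwa [hl_split] at this
  have hN : u < α N + r * s := by
    have := hu
    rwa [hl_split] at this
  rcases lt_or_eq_of_le hsle with hslt | hseq
  · -- s < 0
    refine ⟨(-s)⁻¹ • A, ?_, ?_⟩
    · intro M hM
      have h1 := hdom M hM
      have h2 : frob ((-s)⁻¹ • A) M ≤ (f M).toReal := by
        rw [frob_smul_left, hαfrob]
        rw [inv_mul_le_iff₀ (by linarith)]
        nlinarith
      calc ENNReal.ofReal (frob ((-s)⁻¹ • A) M) ≤ ENNReal.ofReal (f M).toReal :=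
            ENNReal.ofReal_le_ofReal h2
        _ = f M := ENNReal.ofReal_toReal hM
    · rw [frob_smul_left, hαfrob]
      rw [lt_inv_mul_iff₀ (by linarith : (0:ℝ) < -s)]
      nlinarith
  · -- s = 0
    have hα0 : ∀ M : Matd d, f M ≠ ⊤ → α M ≤ 0 := by
      intro M hM
      have := hdom M hM
      rw [hseq] at this
      linarith
    have hαN : u < α N := by
      rw [hseq] at hN
      linarith
    refine ⟨((r + 1) / u) • A, ?_, ?_⟩
    · intro M hM
      rw [frob_smul_left, hαfrob]
      have : (r + 1) / u * α M ≤ 0 :=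
        mul_nonpos_of_nonneg_of_nonpos (by positivity) (hα0 M hM)
      calc ENNReal.ofReal ((r + 1) / u * α M) = 0 := by
            rw [ENNReal.ofReal_eq_zero]; exact this
        _ ≤ f M := zero_le
    · rw [frob_smul_left, hαfrob]
      have h1 : (0:ℝ) < (r + 1) / u := by positivity
      have h2 : (r + 1) / u * u = r + 1 := div_mul_cancel₀ _ (ne_of_gt hupos)
      nlinarith [mul_lt_mul_of_pos_left hαN h1]

/-- The quadratic form associated to a matrix. -/
def quadF (C : Matd d) : Ed d → ℝ := fun y => ∑ i, ∑ j, C i j * (y i * y j)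

/-- Bundled second derivative of the quadratic form. -/
def quadT (C : Matd d) : Ed d →L[ℝ] (Ed d →L[ℝ] ℝ) :=
  ∑ i, ∑ j, C i j • (((EuclideanSpace.proj i).smulRight ((EuclideanSpace.proj j) : Ed d →L[ℝ] ℝ))
    + ((EuclideanSpace.proj j).smulRight ((EuclideanSpace.proj i) : Ed d →L[ℝ] ℝ)))

lemma quadF_hasFDerivAt (C : Matd d) (x : Ed d) : HasFDerivAt (quadF C) (quadT C x) x := by
  have h : ∀ i j : Fin d, HasFDerivAt (fun y : Ed d => C i j * (y i * y j))
      (C i j • (x i • (EuclideanSpace.proj j : Ed d →L[ℝ] ℝ)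
        + x j • (EuclideanSpace.proj i : Ed d →L[ℝ] ℝ))) x := by
    intro i j
    have hi : HasFDerivAt (fun y : Ed d => y i) (EuclideanSpace.proj i : Ed d →L[ℝ] ℝ) x :=
      (EuclideanSpace.proj i : Ed d →L[ℝ] ℝ).hasFDerivAt
    have hj : HasFDerivAt (fun y : Ed d => y j) (EuclideanSpace.proj j : Ed d →L[ℝ] ℝ) x :=
      (EuclideanSpace.proj j : Ed d →L[ℝ] ℝ).hasFDerivAt
    exact (hi.mul hj).const_mul (C i j)
  have hsum : HasFDerivAt (quadF C)
      (∑ i, ∑ j, C i j • (x i • (EuclideanSpace.proj j : Ed d →L[ℝ] ℝ)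
        + x j • (EuclideanSpace.proj i : Ed d →L[ℝ] ℝ))) x := by
    apply HasFDerivAt.fun_sum
    intro i _
    exact HasFDerivAt.fun_sum (fun j _ => h i j)
  convert hsum using 1
  ext v
  simp [quadT, ContinuousLinearMap.sum_apply, ContinuousLinearMap.smul_apply,
    ContinuousLinearMap.add_apply, ContinuousLinearMap.smulRight_apply]

lemma fderiv_quadF (C : Matd d) : fderiv ℝ (quadF C) = fun x => quadT C x := by
  funext x
  exact (quadF_hasFDerivAt C x).fderiv

lemma hess_quadF (C : Matd d) (x : Ed d) : hess (quadF C) x = fun i j => C i j + C j i := by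
  funext i j
  show iteratedFDeriv ℝ 2 (quadF C) x ![_, _] = _
  rw [iteratedFDeriv_two_apply]
  have h0 : (![EuclideanSpace.single i 1, EuclideanSpace.single j 1] : Fin 2 → Ed d) 0
      = EuclideanSpace.single i 1 := rfl
  have h1 : (![EuclideanSpace.single i 1, EuclideanSpace.single j 1] : Fin 2 → Ed d) 1
      = EuclideanSpace.single j 1 := rfl
  rw [h0, h1, fderiv_quadF]
  have : fderiv ℝ (fun x : Ed d => quadT C x) x = quadT C := by
    exact (quadT C).fderiv
  rw [this]
  simp [quadT, ContinuousLinearMap.sum_apply, ContinuousLinearMap.smul_apply,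
    ContinuousLinearMap.add_apply, ContinuousLinearMap.smulRight_apply,
    EuclideanSpace.single_apply]
  simp [apply_ite (fun g : Ed d →L[ℝ] ℝ => g (EuclideanSpace.single j 1)),
    ContinuousLinearMap.smul_apply, EuclideanSpace.single_apply, Finset.sum_ite_eq,
    Finset.sum_ite_eq', mul_ite]
  simp only [Finset.sum_add_distrib]
  congr 1
  · rw [Finset.sum_eq_single i]
    · simp
    · intro b _ hb; simp [hb]
    · intro h; exact absurd (Finset.mem_univ i) h
  · rw [Finset.sum_comm, Finset.sum_eq_single i]
    · simp
    · intro b _ hb; simp [hb]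
    · intro h; exact absurd (Finset.mem_univ i) h

lemma contDiff_quadF (C : Matd d) : ContDiff ℝ 2 (quadF C) := by
  apply ContDiff.sum; intro i _
  apply ContDiff.sum; intro j _
  exact contDiff_const.mul
    (((EuclideanSpace.proj i : Ed d →L[ℝ] ℝ).contDiff).mul
      ((EuclideanSpace.proj j : Ed d →L[ℝ] ℝ).contDiff))

lemma abs_coord_le_norm (y : Ed d) (i : Fin d) : |y i| ≤ ‖y‖ := by
  rw [EuclideanSpace.norm_eq, ← Real.sqrt_sq_eq_abs]
  apply Real.sqrt_le_sqrt
  have := Finset.single_le_sum (f := fun k => ‖y k‖ ^ 2)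
    (fun k _ => sq_nonneg _) (Finset.mem_univ i)
  simpa [Real.norm_eq_abs, sq_abs] using this

lemma integrable_coord_mul {X : Set (Ed d)} {κ : Measure (Ed d)} [IsFiniteMeasure κ]
    (hκX : κ Xᶜ = 0) {R : ℝ} (hXR : X ⊆ Metric.closedBall 0 R) (i j : Fin d) :
    Integrable (fun y : Ed d => y i * y j) κ := by
  have hae : ∀ᵐ y ∂κ, y ∈ X := by
    have := measure_eq_zero_iff_ae_notMem.mp hκX
    filter_upwards [this] with y hy
    simpa using hy
  apply Integrable.mono' (integrable_const (R * R))
  · exact (((EuclideanSpace.proj i).continuous.mul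
      (EuclideanSpace.proj j).continuous).aestronglyMeasurable)
  · filter_upwards [hae] with y hy
    have hnorm : ‖y‖ ≤ R := by
      have := hXR hy
      rwa [Metric.mem_closedBall, dist_zero_right] at this
    have h0 : (0:ℝ) ≤ ‖y‖ := norm_nonneg _
    calc ‖y i * y j‖ = |y i| * |y j| := by rw [norm_mul]; simp [Real.norm_eq_abs]
      _ ≤ ‖y‖ * ‖y‖ := by
          apply mul_le_mul (abs_coord_le_norm y i) (abs_coord_le_norm y j) (abs_nonneg _) h0
      _ ≤ R * R := by nlinarith

lemma frob_sub_right (A M N : Matd d) : frob A (M - N) = frob A M - frob A N := by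
  simp [frob, Matrix.sub_apply, mul_sub, Finset.sum_sub_distrib]

lemma frob_sym_pair {A M : Matd d} (hM : Matrix.transpose M = M) :
    (1/2 : ℝ) * frob (fun i j => A i j + A j i : Matd d) M = frob A M := by
  have hswap : ∀ i j, M j i = M i j := by
    intro i j
    conv_lhs => rw [← hM]
    rfl
  have : frob (fun i j => A i j + A j i : Matd d) M = frob A M + frob A M := by
    calc frob (fun i j => A i j + A j i : Matd d) M
        = (∑ i, ∑ j, A i j * M i j) + ∑ i, ∑ j, A j i * M i j := by
          simp [frob, add_mul, Finset.sum_add_distrib]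
      _ = frob A M + frob A M := by
          congr 1
          rw [Finset.sum_comm]
          simp only [frob]
          apply Finset.sum_congr rfl; intro i _
          apply Finset.sum_congr rfl; intro j _
          rw [hswap i j]
  rw [this]; ring

lemma ofReal_integral_le {κ : Measure (Ed d)} {g : Ed d → ℝ} (hg : Integrable g κ) :
    ENNReal.ofReal (∫ x, g x ∂κ) ≤ ∫⁻ x, ENNReal.ofReal (g x) ∂κ := by
  have h1 : ∫ x, g x ∂κ ≤ ∫ x, max (g x) 0 ∂κ := by
    apply integral_mono hg hg.pos_part
    intro x; exact le_max_left _ _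
  calc ENNReal.ofReal (∫ x, g x ∂κ) ≤ ENNReal.ofReal (∫ x, max (g x) 0 ∂κ) :=
        ENNReal.ofReal_le_ofReal h1
    _ = ∫⁻ x, ENNReal.ofReal (max (g x) 0) ∂κ := by
        rw [ofReal_integral_eq_lintegral_ofReal hg.pos_part]
        filter_upwards with x; exact le_max_right _ _
    _ = ∫⁻ x, ENNReal.ofReal (g x) ∂κ := by
        apply lintegral_congr
        intro x
        rcases le_total (g x) 0 with h | h
        · simp [max_eq_right h, ENNReal.ofReal_eq_zero.mpr h]
        · rw [max_eq_left h]

/-- Second moment integral of the quadratic form. -/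
lemma integral_quadF {A : Matd d} {X : Set (Ed d)} {κ : Measure (Ed d)} [IsFiniteMeasure κ]
    (hκX : κ Xᶜ = 0) {R : ℝ} (hXR : X ⊆ Metric.closedBall 0 R) :
    ∫ x, quadF A x ∂κ = frob A (secondMoment κ) := by
  have hint : ∀ i j : Fin d, Integrable (fun x : Ed d => A i j * (x i * x j)) κ :=
    fun i j => (integrable_coord_mul hκX hXR i j).const_mul _
  calc ∫ x, quadF A x ∂κ
      = ∑ i, ∫ x, ∑ j, A i j * (x i * x j) ∂κ := by
        rw [← integral_finset_sum]
        · rfl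
        · intro i _
          exact integrable_finset_sum _ (fun j _ => hint i j)
    _ = ∑ i, ∑ j, ∫ x, A i j * (x i * x j) ∂κ := by
        apply Finset.sum_congr rfl; intro i _
        exact integral_finset_sum _ (fun j _ => hint i j)
    _ = frob A (secondMoment κ) := by
        apply Finset.sum_congr rfl; intro i _
        apply Finset.sum_congr rfl; intro j _
        rw [integral_const_mul]
        rfl

/-- The key bound for a single static competitor and a single dual matrix. -/
lemma competitor_bound {f : Matd d → ℝ≥0∞} (hA1 : CostA1 f)
    {X : Set (Ed d)} (hXb : Bornology.IsBounded X)
    {μ ν : Measure (Ed d)} [IsFiniteMeasure μ] [IsFiniteMeasure ν]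
    (hμX : μ Xᶜ = 0) (hνX : ν Xᶜ = 0)
    {m : Measure (Ed d)} {ρ : Ed d → Matd d}
    (hcomp : IsStaticCompetitor X μ ν m ρ) {A : Matd d} (hA : A ∈ domFstar f) :
    ENNReal.ofReal (frob A (secondMoment ν - secondMoment μ)) ≤ ∫⁻ x, f (ρ x) ∂m := by
  obtain ⟨hmfin, hmX, hρpsd, heq⟩ := hcomp
  haveI := hmfin
  have hρsym : ∀ x, Matrix.transpose (ρ x) = ρ x := by
    intro x
    have h := (hρpsd x).1
    rw [← Matrix.conjTranspose_eq_transpose_of_trivial]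
    exact h
  obtain ⟨R0, hR0⟩ := (Metric.isBounded_iff_subset_closedBall 0).mp hXb
  set R := max R0 0 with hR
  have hXR : X ⊆ Metric.closedBall 0 R :=
    hR0.trans (Metric.closedBall_subset_closedBall (le_max_left _ _))
  have hRnn : (0:ℝ) ≤ R := le_max_right _ _
  set χ : ContDiffBump (0 : Ed d) := ⟨R+1, R+2, by linarith, by linarith⟩ with hχ
  set φ : Ed d → ℝ := fun y => χ y * quadF A y with hφ
  have hφc2 : IsC2c φ := by
    constructor
    · exact χ.contDiff.mul (contDiff_quadF A)
    · exact χ.hasCompactSupport.mul_right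
  have hXball : X ⊆ Metric.ball 0 (R+1) :=
    hXR.trans (Metric.closedBall_subset_ball (by linarith))
  have hagree : ∀ y ∈ Metric.ball (0 : Ed d) (R+1), φ y = quadF A y := by
    intro y hy
    have h1 : χ y = 1 := by
      apply χ.one_of_mem_closedBall
      have : χ.rIn = R + 1 := rfl
      rw [this]
      exact Metric.ball_subset_closedBall hy
    rw [hφ]
    simp [h1]
  have hhess : ∀ y ∈ Metric.ball (0 : Ed d) (R+1),
      hess φ y = fun i j => A i j + A j i := by
    intro y hy
    have heq2 : hess φ y = hess (quadF A) y := by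
      funext i j
      show iteratedFDeriv ℝ 2 φ y _ = iteratedFDeriv ℝ 2 (quadF A) y _
      rw [← iteratedFDerivWithin_univ, ← iteratedFDerivWithin_univ]
      have h3 : iteratedFDerivWithin ℝ 2 φ univ y
          = iteratedFDerivWithin ℝ 2 (quadF A) univ y := by
        apply Filter.EventuallyEq.iteratedFDerivWithin_eq _ (hagree y hy)
        rw [nhdsWithin_univ]
        exact Filter.eventuallyEq_of_mem (Metric.isOpen_ball.mem_nhds hy) hagree
      rw [h3]
    rw [heq2, hess_quadF]
  have haem : ∀ᵐ x ∂m, x ∈ X := by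
    have := measure_eq_zero_iff_ae_notMem.mp hmX
    filter_upwards [this] with x hx; simpa using hx
  have haeμ : ∀ᵐ x ∂μ, x ∈ X := by
    have := measure_eq_zero_iff_ae_notMem.mp hμX
    filter_upwards [this] with x hx; simpa using hx
  have haeν : ∀ᵐ x ∂ν, x ∈ X := by
    have := measure_eq_zero_iff_ae_notMem.mp hνX
    filter_upwards [this] with x hx; simpa using hx
  have hL : ∫ x, (1/2 : ℝ) * frob (hess φ x) (ρ x) ∂m = ∫ x, frob A (ρ x) ∂m := by
    apply integral_congr_ae
    filter_upwards [haem] with x hx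
    rw [hhess x (hXball hx)]
    exact frob_sym_pair (hρsym x)
  have hRν : ∫ x, φ x ∂ν = frob A (secondMoment ν) := by
    have h1 : ∫ x, φ x ∂ν = ∫ x, quadF A x ∂ν := by
      apply integral_congr_ae
      filter_upwards [haeν] with x hx
      exact hagree x (hXball hx)
    rw [h1]
    exact integral_quadF hνX hXR
  have hRμ : ∫ x, φ x ∂μ = frob A (secondMoment μ) := by
    have h1 : ∫ x, φ x ∂μ = ∫ x, quadF A x ∂μ := by
      apply integral_congr_ae
      filter_upwards [haeμ] with x hx
      exact hagree x (hXball hx)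
    rw [h1]
    exact integral_quadF hμX hXR
  have hkey : ∫ x, frob A (ρ x) ∂m = frob A (secondMoment ν - secondMoment μ) := by
    rw [← hL, heq φ hφc2, hRν, hRμ, frob_sub_right]
  by_cases hint : Integrable (fun x => frob A (ρ x)) m
  · calc ENNReal.ofReal (frob A (secondMoment ν - secondMoment μ))
        = ENNReal.ofReal (∫ x, frob A (ρ x) ∂m) := by rw [hkey]
      _ ≤ ∫⁻ x, ENNReal.ofReal (frob A (ρ x)) ∂m := ofReal_integral_le hint
      _ ≤ ∫⁻ x, f (ρ x) ∂m := by
          apply lintegral_mono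
          intro x
          show ENNReal.ofReal (frob A (ρ x)) ≤ f (ρ x)
          by_cases hfx : f (ρ x) = ⊤
          · rw [hfx]; exact le_top
          · exact hA _ hfx
  · have hz : frob A (secondMoment ν - secondMoment μ) = 0 := by
      rw [← hkey, integral_undef hint]
    rw [hz]
    simp

end AuxStmt5

/-- Corollary 3.6. For `μ, ν ∈ M₊(X)` with `μ(X) = ν(X)`,
`F(μ,ν) ≥ f(∫_X x ⊗ x d(ν − μ))`. -/
theorem stmt5 {d : ℕ} (hd : 0 < d) (f : Matd d → ℝ≥0∞) (hA1 : CostA1 f) (hA2 : CostA2 f)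
    (Ω X : Set (Ed d)) (hΩopen : IsOpen Ω) (hΩconv : Convex ℝ Ω)
    (hΩbdd : Bornology.IsBounded Ω) (hΩne : Ω.Nonempty) (hX : X = closure Ω)
    (μ ν : Measure (Ed d)) [IsFiniteMeasure μ] [IsFiniteMeasure ν]
    (hμX : μ Xᶜ = 0) (hνX : ν Xᶜ = 0) (hmass : μ X = ν X) :
    f (secondMoment ν - secondMoment μ) ≤ Fstat f X μ ν := by
  have hXb : Bornology.IsBounded X := by
    rw [hX]
    exact hΩbdd.closure
  apply le_sInf
  rintro c ⟨m, ρ, hcomp, rfl⟩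
  by_contra hcon
  push_neg at hcon
  obtain ⟨r, hr0, h1, h2⟩ := ENNReal.lt_iff_exists_real_btwn.mp hcon
  obtain ⟨A, hA, hrA⟩ := exists_domFstar_gt hA1 hA2 _ r h2
  have hb := competitor_bound hA1 hXb hμX hνX hcomp hA
  have : ENNReal.ofReal r ≤ ENNReal.ofReal (frob A (secondMoment ν - secondMoment μ)) :=
    ENNReal.ofReal_le_ofReal hrA.le
  exact absurd (this.trans hb) (not_le.mpr h1)
end

section
/- Assume (A3): dom(f) = S⁺_d and there exists k > 0 with f(A) ≤ k·tr(A) for all A ∈ S⁺_d. Then for each bounded lower semicontinuous φ on X with φ = φ^G, the function x ↦ φ(x) + k|x|² is convex on X and locally Lipschitz on Ω. -/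
open MeasureTheory Set Filter Topology
open scoped ENNReal NNReal Classical

-- Auxiliary lemmas
lemma contdiff2_bits {ψ : ℝ → ℝ} (hψ : ContDiff ℝ 2 ψ) :
    Differentiable ℝ ψ ∧ Differentiable ℝ (deriv ψ) ∧ Continuous (deriv (deriv ψ)) := by
  have h2 : (2 : WithTop ℕ∞) = 1 + 1 := by norm_num
  rw [h2, contDiff_succ_iff_deriv] at hψ
  obtain ⟨h1, -, h3⟩ := hψ
  exact ⟨h1, h3.differentiable one_ne_zero, h3.continuous_deriv le_rfl⟩

/-- Green's function identity. -/
lemma green {ψ : ℝ → ℝ} (hψ : ContDiff ℝ 2 ψ) {t : ℝ} (ht0 : 0 ≤ t) (ht1 : t ≤ 1) :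
    ∫ r in (0:ℝ)..1, (min r t * (1 - max r t)) * deriv (deriv ψ) r
      = (1 - t) * ψ 0 + t * ψ 1 - ψ t := by
  obtain ⟨hd1, hd2, hc2⟩ := contdiff2_bits hψ
  have hdd : ∀ r : ℝ, HasDerivAt (deriv ψ) (deriv (deriv ψ) r) r :=
    fun r => (hd2 r).hasDerivAt
  have hd : ∀ r : ℝ, HasDerivAt ψ (deriv ψ r) r := fun r => (hd1 r).hasDerivAt
  have hii : ∀ a b : ℝ, IntervalIntegrable (deriv (deriv ψ)) volume a b :=
    fun a b => hc2.intervalIntegrable a b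
  have hii' : ∀ a b : ℝ, IntervalIntegrable (deriv ψ) volume a b :=
    fun a b => (hd2.continuous).intervalIntegrable a b
  -- part 1 : ∫ 0..t, r * ψ'' = t ψ'(t) - (ψ t - ψ 0)
  have P1 : ∫ r in (0:ℝ)..t, r * deriv (deriv ψ) r
      = t * deriv ψ t - (ψ t - ψ 0) := by
    have := intervalIntegral.integral_mul_deriv_eq_deriv_mul
      (u := fun r : ℝ => r) (u' := fun _ => (1:ℝ)) (v := deriv ψ) (v' := deriv (deriv ψ))
      (a := 0) (b := t) (fun x _ => hasDerivAt_id x) (fun x _ => hdd x)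
      (intervalIntegrable_const) (hii 0 t)
    rw [this]
    simp only [one_mul]
    rw [intervalIntegral.integral_deriv_eq_sub (fun x _ => hd1 x) (hii' 0 t)]
    ring
  -- part 2 : ∫ t..1, (1-r) * ψ'' = -(1-t) ψ'(t) + (ψ 1 - ψ t)
  have P2 : ∫ r in t..(1:ℝ), (1 - r) * deriv (deriv ψ) r
      = -((1 - t) * deriv ψ t) + (ψ 1 - ψ t) := by
    have := intervalIntegral.integral_mul_deriv_eq_deriv_mul
      (u := fun r : ℝ => 1 - r) (u' := fun _ => (-1:ℝ)) (v := deriv ψ) (v' := deriv (deriv ψ))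
      (a := t) (b := 1)
      (fun x _ => by simpa using (hasDerivAt_id x).const_sub 1)
      (fun x _ => hdd x) (intervalIntegrable_const) (hii t 1)
    rw [this]
    simp only [neg_one_mul]
    rw [intervalIntegral.integral_neg,
      intervalIntegral.integral_deriv_eq_sub (fun x _ => hd1 x) (hii' t 1)]
    ring
  have hsplit : ∫ r in (0:ℝ)..1, (min r t * (1 - max r t)) * deriv (deriv ψ) r
      = (∫ r in (0:ℝ)..t, (min r t * (1 - max r t)) * deriv (deriv ψ) r)
        + ∫ r in t..(1:ℝ), (min r t * (1 - max r t)) * deriv (deriv ψ) r := by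
    rw [intervalIntegral.integral_add_adjacent_intervals]
    · exact ((((continuous_id.min continuous_const).mul
        ((continuous_const.sub (continuous_id.max continuous_const)))).mul hc2)).intervalIntegrable 0 t
    · exact ((((continuous_id.min continuous_const).mul
        ((continuous_const.sub (continuous_id.max continuous_const)))).mul hc2)).intervalIntegrable t 1
  have E1 : ∫ r in (0:ℝ)..t, (min r t * (1 - max r t)) * deriv (deriv ψ) r
      = (1 - t) * ∫ r in (0:ℝ)..t, r * deriv (deriv ψ) r := by
    rw [← intervalIntegral.integral_const_mul]
    apply intervalIntegral.integral_congr
    intro r hr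
    rw [uIcc_of_le ht0] at hr
    have h1 : min r t = r := min_eq_left hr.2
    have h2 : max r t = t := max_eq_right hr.2
    show (min r t * (1 - max r t)) * deriv (deriv ψ) r = (1 - t) * (r * deriv (deriv ψ) r)
    rw [h1, h2]; ring
  have E2 : ∫ r in t..(1:ℝ), (min r t * (1 - max r t)) * deriv (deriv ψ) r
      = t * ∫ r in t..(1:ℝ), (1 - r) * deriv (deriv ψ) r := by
    rw [← intervalIntegral.integral_const_mul]
    apply intervalIntegral.integral_congr
    intro r hr
    rw [uIcc_of_le ht1] at hr
    have h1 : min r t = t := min_eq_right hr.1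
    have h2 : max r t = r := max_eq_left hr.1
    show (min r t * (1 - max r t)) * deriv (deriv ψ) r = t * ((1 - r) * deriv (deriv ψ) r)
    rw [h1, h2]; ring
  rw [hsplit, E1, E2, P1, P2]; ring

lemma euclid_decomp {d : ℕ} (v : Ed d) :
    v = ∑ i, v i • EuclideanSpace.single i (1:ℝ) := by
  ext j
  rw [WithLp.ofLp_sum, Finset.sum_apply]
  simp [EuclideanSpace.single_apply]

lemma frob_hess_vv {d : ℕ} (φ : Ed d → ℝ) (x v : Ed d) :
    frob (hess φ x) (fun i j => v i * v j) = fderiv ℝ (fderiv ℝ φ) x v v := by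
  have hij : ∀ i j, hess φ x i j
      = fderiv ℝ (fderiv ℝ φ) x (EuclideanSpace.single i 1) (EuclideanSpace.single j 1) := by
    intro i j
    simp [hess, iteratedFDeriv_two_apply]
  conv_rhs => rw [euclid_decomp v]
  rw [map_sum]
  simp only [ContinuousLinearMap.coe_sum', Finset.sum_apply, _root_.map_smul,
    ContinuousLinearMap.smul_apply, map_sum, Finset.smul_sum]
  unfold frob
  rw [Finset.sum_comm]
  apply Finset.sum_congr rfl
  intro i _
  apply Finset.sum_congr rfl
  intro j _
  rw [hij j i]
  simp [smul_eq_mul]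
  ring

lemma line_contDiff {d : ℕ} {φ : Ed d → ℝ} (h : ContDiff ℝ 2 φ) (a v : Ed d) :
    ContDiff ℝ 2 (fun r : ℝ => φ (a + r • v)) :=
  h.comp (contDiff_const.add (contDiff_id.smul contDiff_const))

lemma line_deriv2 {d : ℕ} {φ : Ed d → ℝ} (h : ContDiff ℝ 2 φ) (a v : Ed d) (r : ℝ) :
    deriv (deriv (fun r : ℝ => φ (a + r • v))) r
      = fderiv ℝ (fderiv ℝ φ) (a + r • v) v v := by
  have hγ : ∀ s : ℝ, HasDerivAt (fun r : ℝ => a + r • v) v s := by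
    intro s
    simpa using ((hasDerivAt_id s).smul_const v).const_add a
  have hD : ContDiff ℝ 1 (fderiv ℝ φ) := h.fderiv_right (by norm_num)
  have hderiv1 : deriv (fun r : ℝ => φ (a + r • v))
      = fun s : ℝ => fderiv ℝ φ (a + s • v) v := by
    funext s
    exact (((h.differentiable (by norm_num) (a + s • v)).hasFDerivAt).comp_hasDerivAt s
      (hγ s)).deriv
  rw [hderiv1]
  have hc : HasDerivAt (fun s : ℝ => fderiv ℝ φ (a + s • v))
      (fderiv ℝ (fderiv ℝ φ) (a + r • v) v) r :=
    ((hD.differentiable one_ne_zero (a + r • v)).hasFDerivAt).comp_hasDerivAt r (hγ r)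
  have := hc.clm_apply (hasDerivAt_const r v)
  simpa using this.deriv

lemma line_cont_hess {d : ℕ} {φ : Ed d → ℝ} (h : ContDiff ℝ 2 φ) (v : Ed d) :
    Continuous (fun y : Ed d => frob (hess φ y) (fun i j => v i * v j)) := by
  have : (fun y : Ed d => frob (hess φ y) (fun i j => v i * v j))
      = fun y => fderiv ℝ (fderiv ℝ φ) y v v := by
    funext y; exact frob_hess_vv φ y v
  rw [this]
  have hD : ContDiff ℝ 1 (fderiv ℝ φ) := h.fderiv_right (by norm_num)
  have hc : Continuous (fderiv ℝ (fderiv ℝ φ)) := hD.continuous_fderiv one_ne_zero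
  exact (hc.clm_apply continuous_const).clm_apply continuous_const


-- dirac helper
lemma dirac_helper {d : ℕ} (φ : Ed d → ℝ) {c : ℝ≥0∞} (hc : c ≠ ⊤) (a : Ed d) :
    Integrable φ (c • Measure.dirac a) ∧
      ∫ y, φ y ∂(c • Measure.dirac a) = c.toReal * φ a := by
  have hae : φ =ᵐ[c • Measure.dirac a] (fun _ => φ a) := by
    rw [Filter.EventuallyEq, ae_iff]
    have : {y : Ed d | ¬ φ y = φ a}.indicator (1 : Ed d → ℝ≥0∞) a = 0 := by
      simp only [Set.indicator_apply_eq_zero]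
      intro h
      simp at h
    simp [Measure.smul_apply, Measure.dirac_apply, this]
  haveI : IsFiniteMeasure (c • Measure.dirac a) := by
    constructor
    rw [Measure.smul_apply]
    simp [lt_top_iff_ne_top, hc]
  constructor
  · exact (integrable_const (φ a)).congr hae.symm
  · rw [integral_congr_ae hae, integral_const]
    simp [Measure.smul_apply, ENNReal.toReal_mul]

lemma psd_vv {d : ℕ} (v : Ed d) : Matrix.PosSemidef (fun i j => v i * v j : Matd d) := by
  have h := Matrix.posSemidef_conjTranspose_mul_self (Matrix.replicateRow Unit (fun i => v i))
  have e : (fun i j => v i * v j : Matd d) = (Matrix.replicateRow Unit (fun i => v i)).conjTranspose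
      * Matrix.replicateRow Unit (fun i => v i) := by
    ext i j
    simp [Matrix.mul_apply, Matrix.conjTranspose_apply, Matrix.replicateRow_apply]
  rw [e]; exact h

lemma trace_vv {d : ℕ} (v : Ed d) :
    Matrix.trace (fun i j => v i * v j : Matd d) = ‖v‖^2 := by
  have h : ‖v‖^2 = ∑ i, (v i)^2 := by
    rw [EuclideanSpace.norm_eq]
    rw [Real.sq_sqrt (by positivity)]
    simp [Real.norm_eq_abs, sq_abs]
  rw [h]
  simp [Matrix.trace, Matrix.diag, sq]


lemma gmass {t : ℝ} (ht0 : 0 ≤ t) (ht1 : t ≤ 1) :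
    ∫ r in (0:ℝ)..1, 2 * (min r t * (1 - max r t)) = t * (1 - t) := by
  have hψ : ContDiff ℝ 2 (fun r : ℝ => r ^ 2) := by fun_prop
  have hd1 : deriv (fun r : ℝ => r ^ 2) = fun r => 2 * r := by
    funext r; simp [deriv_pow]
  have hd2 : deriv (deriv (fun r : ℝ => r ^ 2)) = fun _ => (2:ℝ) := by
    rw [hd1]; funext r
    rw [deriv_const_mul _ differentiableAt_fun_id]
    simp
  have hg := green hψ ht0 ht1
  rw [hd2] at hg
  have : ∫ r in (0:ℝ)..1, 2 * (min r t * (1 - max r t))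
      = ∫ r in (0:ℝ)..1, (min r t * (1 - max r t)) * (fun _ : ℝ => (2:ℝ)) r := by
    apply intervalIntegral.integral_congr
    intro r _
    show 2 * (min r t * (1 - max r t)) = (min r t * (1 - max r t)) * 2
    ring
  rw [this, hg]
  norm_num
  ring

lemma key_ineq {d : ℕ} (f : Matd d → ℝ≥0∞) (X : Set (Ed d))
    (hXconv : Convex ℝ X) (hXclosed : IsClosed X)
    {k : ℝ} (hk : 0 < k)
    (hA3bd : ∀ A : Matd d, A.PosSemidef → f A ≤ ENNReal.ofReal (k * A.trace))
    (φ : Ed d → ℝ) (hG : GEq f X φ X)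
    {a b : Ed d} (ha : a ∈ X) (hb : b ∈ X) {t : ℝ} (ht0 : 0 ≤ t) (ht1 : t ≤ 1) :
    φ (a + t • (b - a)) ≤ (1 - t) * φ a + t * φ b + k * (t * (1 - t) * ‖b - a‖ ^ 2) := by
  set v : Ed d := b - a with hv
  set γ : ℝ → Ed d := fun r => a + r • v with hγ
  have hγrep : ∀ r : ℝ, γ r = (1 - r) • a + r • b := by
    intro r; show a + r • (b - a) = (1 - r) • a + r • b; module
  have hγX : ∀ r : ℝ, 0 ≤ r → r ≤ 1 → γ r ∈ X := by
    intro r h0 h1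
    rw [hγrep]
    exact hXconv ha hb (by linarith) h0 (by ring)
  have hxX : γ t ∈ X := hγX t ht0 ht1
  set G : ℝ → ℝ := fun r => min r t * (1 - max r t) with hGdef
  have hGcont : Continuous G := ((continuous_id.min continuous_const).mul
    (continuous_const.sub (continuous_id.max continuous_const)))
  have hGnonneg : ∀ r ∈ Icc (0:ℝ) 1, 0 ≤ 2 * G r := by
    intro r hr
    have h1 : 0 ≤ min r t := le_min hr.1 ht0
    have h2 : max r t ≤ 1 := max_le hr.2 ht1
    have : 0 ≤ G r := mul_nonneg h1 (by linarith)
    linarith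
  set μ₀ : Measure ℝ := (volume.restrict (Ioo 0 1)).withDensity
      (fun r => ((2 * G r).toNNReal : ℝ≥0∞)) with hμ₀
  have hγcont : Continuous γ := continuous_const.add (continuous_id.smul continuous_const)
  set m : Measure (Ed d) := μ₀.map γ with hm
  set ρ : Ed d → Matd d := fun _ => (fun i j => v i * v j) with hρ
  have hdensmeas : Measurable (fun r => (2 * G r).toNNReal) :=
    (continuous_real_toNNReal.comp (continuous_const.mul hGcont)).measurable
  -- integral transfer
  have hInt : ∀ h : Ed d → ℝ, Continuous h →
      ∫ y, h y ∂m = ∫ r in (0:ℝ)..1, (2 * G r) * h (γ r) := by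
    intro h hc
    rw [hm, integral_map hγcont.measurable.aemeasurable hc.aestronglyMeasurable, hμ₀,
      integral_withDensity_eq_integral_smul hdensmeas]
    rw [← MeasureTheory.integral_Ioc_eq_integral_Ioo,
      ← intervalIntegral.integral_of_le (zero_le_one)]
    apply intervalIntegral.integral_congr
    intro r hr
    rw [uIcc_of_le zero_le_one] at hr
    show (2 * G r).toNNReal • h (γ r) = (2 * G r) * h (γ r)
    rw [NNReal.smul_def, Real.coe_toNNReal _ (hGnonneg r hr), smul_eq_mul]
  -- total mass
  have hMass : m univ = ENNReal.ofReal (t * (1 - t)) := by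
    rw [hm, Measure.map_apply hγcont.measurable MeasurableSet.univ, preimage_univ, hμ₀,
      withDensity_apply _ MeasurableSet.univ, Measure.restrict_univ]
    have hint2G : IntegrableOn (fun r => 2 * G r) (Ioo 0 1) volume :=
      ((continuous_const.mul hGcont).integrableOn_Icc (a := 0) (b := 1)).mono_set
        Ioo_subset_Icc_self
    have hae : 0 ≤ᵐ[volume.restrict (Ioo (0:ℝ) 1)] (fun r => 2 * G r) := by
      rw [EventuallyLE, ae_restrict_iff' measurableSet_Ioo]
      exact ae_of_all _ fun r hr => hGnonneg r (Ioo_subset_Icc_self hr)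
    have := ofReal_integral_eq_lintegral_ofReal hint2G hae
    have hcast : ∫⁻ x in Ioo (0:ℝ) 1, ((2 * G x).toNNReal : ℝ≥0∞)
        = ∫⁻ x in Ioo (0:ℝ) 1, ENNReal.ofReal (2 * G x) := rfl
    rw [hcast, ← this]
    congr 1
    rw [← MeasureTheory.integral_Ioc_eq_integral_Ioo,
      ← intervalIntegral.integral_of_le (zero_le_one)]
    exact gmass ht0 ht1
  -- support
  have hmXc : m Xᶜ = 0 := by
    rw [hm, Measure.map_apply hγcont.measurable hXclosed.measurableSet.compl, hμ₀,
      withDensity_apply _ (hγcont.measurable hXclosed.measurableSet.compl),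
      Measure.restrict_restrict (hγcont.measurable hXclosed.measurableSet.compl)]
    have : γ ⁻¹' Xᶜ ∩ Ioo 0 1 = ∅ := by
      ext r
      simp only [mem_inter_iff, mem_preimage, mem_compl_iff, mem_Ioo, mem_empty_iff_false,
        iff_false, not_and, and_imp]
      intro hnX h0 h1
      exact hnX (hγX r h0.le h1.le)
    rw [this]
    simp
  haveI hFin : IsFiniteMeasure m := by
    constructor
    rw [hMass]
    exact ENNReal.ofReal_lt_top
  -- the competitor measure p
  set p : Measure (Ed d) := (ENNReal.ofReal (1 - t)) • Measure.dirac a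
      + (ENNReal.ofReal t) • Measure.dirac b with hp
  have hp_int : ∀ g : Ed d → ℝ, ∫ y, g y ∂p = (1 - t) * g a + t * g b := by
    intro g
    rw [hp, integral_add_measure (dirac_helper g ENNReal.ofReal_ne_top a).1
      (dirac_helper g ENNReal.ofReal_ne_top b).1,
      (dirac_helper g ENNReal.ofReal_ne_top a).2, (dirac_helper g ENNReal.ofReal_ne_top b).2,
      ENNReal.toReal_ofReal (by linarith), ENNReal.toReal_ofReal ht0]
  haveI hprob : IsProbabilityMeasure p := by
    constructor
    rw [hp]
    simp only [Measure.add_apply, Measure.smul_apply, measure_univ, smul_eq_mul, mul_one]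
    rw [← ENNReal.ofReal_add (by linarith) ht0]
    norm_num
  have hpXc : p Xᶜ = 0 := by
    rw [hp]
    simp only [Measure.add_apply, Measure.smul_apply, Measure.dirac_apply, smul_eq_mul]
    rw [Set.indicator_of_notMem (by simp [ha]), Set.indicator_of_notMem (by simp [hb])]
    simp
  -- the PDE identity
  have hcomp : IsStaticCompetitor X (Measure.dirac (γ t)) p m ρ := by
    refine ⟨hFin, hmXc, fun _ => psd_vv v, ?_⟩
    intro φ₁ hφ₁
    obtain ⟨hφ₁s, _⟩ := hφ₁
    have hcont : Continuous (fun y => (1/2 : ℝ) * frob (hess φ₁ y) (ρ y)) :=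
      continuous_const.mul (line_cont_hess hφ₁s v)
    rw [hInt _ hcont]
    have hψs : ContDiff ℝ 2 (fun r : ℝ => φ₁ (a + r • v)) := line_contDiff hφ₁s a v
    have hcongr : ∫ r in (0:ℝ)..1, (2 * G r) * ((1/2 : ℝ) * frob (hess φ₁ (γ r)) (ρ (γ r)))
        = ∫ r in (0:ℝ)..1, G r * deriv (deriv (fun r : ℝ => φ₁ (a + r • v))) r := by
      apply intervalIntegral.integral_congr
      intro r _
      show (2 * G r) * ((1/2 : ℝ) * frob (hess φ₁ (γ r)) (fun i j => v i * v j))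
          = G r * deriv (deriv (fun r : ℝ => φ₁ (a + r • v))) r
      rw [frob_hess_vv, line_deriv2 hφ₁s a v r]
      show 2 * G r * (1/2 * (fderiv ℝ (fderiv ℝ φ₁) (a + r • v)) v v)
          = G r * (fderiv ℝ (fderiv ℝ φ₁) (a + r • v)) v v
      ring
    rw [hcongr]
    have hgr := green hψs ht0 ht1
    have hgr2 : ∫ r in (0:ℝ)..1, G r * deriv (deriv (fun r : ℝ => φ₁ (a + r • v))) r
        = (1 - t) * φ₁ (a + (0:ℝ) • v) + t * φ₁ (a + (1:ℝ) • v) - φ₁ (a + t • v) := hgr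
    rw [hgr2, hp_int φ₁, integral_dirac]
    have e0 : a + (0:ℝ) • v = a := by module
    have e1 : a + (1:ℝ) • v = b := by rw [hv]; module
    rw [e0, e1]
  -- cost bound
  set B : ℝ := k * (t * (1 - t) * ‖v‖ ^ 2) with hB
  have hBnonneg : 0 ≤ B := by
    have : (0:ℝ) ≤ t * (1 - t) := mul_nonneg ht0 (by linarith)
    positivity
  have hcost : ∫⁻ y, f (ρ y) ∂m ≤ ENNReal.ofReal B := by
    simp only [hρ]
    rw [lintegral_const, hMass]
    calc f (fun i j => v i * v j) * ENNReal.ofReal (t * (1 - t))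
        ≤ ENNReal.ofReal (k * ‖v‖ ^ 2) * ENNReal.ofReal (t * (1 - t)) := by
          apply mul_le_mul_left
          have := hA3bd _ (psd_vv v)
          rwa [trace_vv] at this
      _ = ENNReal.ofReal B := by
          rw [← ENNReal.ofReal_mul (by positivity), hB]
          ring_nf
  have hGle : Gcost f X (γ t) p ≤ ENNReal.ofReal B := by
    refine le_trans (sInf_le ⟨m, ρ, hcomp, rfl⟩) hcost
  -- assemble via GTrans
  have hGx := hG (γ t) hxX
  have hmem : ((∫ y, φ y ∂p : ℝ) : EReal) + ((Gcost f X (γ t) p : ℝ≥0∞) : EReal)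
      ∈ { c : EReal | ∃ q : Measure (Ed d), IsProbabilityMeasure q ∧ q Xᶜ = 0 ∧
        c = ((∫ y, φ y ∂q : ℝ) : EReal) + ((Gcost f X (γ t) q : ℝ≥0∞) : EReal) } :=
    ⟨p, hprob, hpXc, rfl⟩
  have hle1 : ((φ (γ t) : ℝ) : EReal)
      ≤ ((∫ y, φ y ∂p : ℝ) : EReal) + ((Gcost f X (γ t) p : ℝ≥0∞) : EReal) := by
    rw [← hGx]
    exact sInf_le hmem
  have hle2 : ((Gcost f X (γ t) p : ℝ≥0∞) : EReal) ≤ ((B : ℝ) : EReal) := by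
    have h1 : ((Gcost f X (γ t) p : ℝ≥0∞) : EReal)
        ≤ ((ENNReal.ofReal B : ℝ≥0∞) : EReal) :=
      EReal.coe_ennreal_le_coe_ennreal_iff.2 hGle
    rwa [EReal.coe_ennreal_ofReal, max_eq_left hBnonneg] at h1
  have hle3 : ((φ (γ t) : ℝ) : EReal)
      ≤ (((∫ y, φ y ∂p : ℝ) + B : ℝ) : EReal) := by
    calc ((φ (γ t) : ℝ) : EReal)
        ≤ ((∫ y, φ y ∂p : ℝ) : EReal) + ((Gcost f X (γ t) p : ℝ≥0∞) : EReal) := hle1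
      _ ≤ ((∫ y, φ y ∂p : ℝ) : EReal) + ((B : ℝ) : EReal) := add_le_add_right hle2 _
      _ = (((∫ y, φ y ∂p : ℝ) + B : ℝ) : EReal) := by rw [← EReal.coe_add]
  have hfinal : φ (γ t) ≤ (∫ y, φ y ∂p) + B := EReal.coe_le_coe_iff.1 hle3
  rw [hp_int φ] at hfinal
  calc φ (a + t • (b - a)) = φ (γ t) := rfl
    _ ≤ (1 - t) * φ a + t * φ b + B := by linarith
    _ = (1 - t) * φ a + t * φ b + k * (t * (1 - t) * ‖b - a‖ ^ 2) := by rw [hB, hv]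


lemma norm_combo_identity {d : ℕ} (a b : Ed d) {s t : ℝ} (hs : 0 ≤ s) (ht : 0 ≤ t)
    (hst : s + t = 1) :
    s * ‖a‖ ^ 2 + t * ‖b‖ ^ 2 - ‖s • a + t • b‖ ^ 2 = s * t * ‖b - a‖ ^ 2 := by
  have h1 := norm_add_sq_real (s • a) (t • b)
  have h2 := norm_sub_sq_real b a
  rw [norm_smul, norm_smul, real_inner_smul_left, real_inner_smul_right] at h1
  simp only [Real.norm_eq_abs] at h1
  rw [abs_of_nonneg hs, abs_of_nonneg ht] at h1
  have hcm : (inner ℝ b a : ℝ) = inner ℝ a b := real_inner_comm a b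
  rw [hcm] at h2
  have hs1 : s = 1 - t := by linarith
  subst hs1
  linear_combination (-1) * h1 - (1 - t) * t * h2


/-- Corollary 4.6. Under (A3), for each bounded lower semicontinuous
`φ` on `X` with `φ = φ^G`, the function `x ↦ φ(x) + k|x|²` is convex on `X` and locally
Lipschitz on `Ω`. -/
theorem stmt15 {d : ℕ} (hd : 0 < d) (f : Matd d → ℝ≥0∞) (hA1 : CostA1 f) (hA2 : CostA2 f)
    (Ω X : Set (Ed d)) (hΩopen : IsOpen Ω) (hΩconv : Convex ℝ Ω)
    (hΩbdd : Bornology.IsBounded Ω) (hΩne : Ω.Nonempty) (hX : X = closure Ω)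
    (k : ℝ) (hk : 0 < k)
    (hA3dom : ∀ M : Matd d, f M ≠ ⊤ ↔ M.PosSemidef)
    (hA3bd : ∀ A : Matd d, A.PosSemidef → f A ≤ ENNReal.ofReal (k * A.trace))
    (φ : Ed d → ℝ) (hbdd : ∃ C : ℝ, ∀ x ∈ X, |φ x| ≤ C)
    (hlsc : LowerSemicontinuousOn φ X) (hG : GEq f X φ X) :
    ConvexOn ℝ X (fun x => φ x + k * ‖x‖ ^ 2) ∧
    (∀ x ∈ Ω, ∃ (K : NNReal) (t : Set (Ed d)), t ∈ 𝓝[Ω] x ∧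
      LipschitzOnWith K (fun y => φ y + k * ‖y‖ ^ 2) t) := by
  have hXclosed : IsClosed X := hX ▸ isClosed_closure
  have hXconv : Convex ℝ X := hX ▸ hΩconv.closure
  have hconv : ConvexOn ℝ X (fun x => φ x + k * ‖x‖ ^ 2) := by
    refine ⟨hXconv, ?_⟩
    intro a ha b hb s t hs ht hst
    simp only [smul_eq_mul]
    have hcomb : a + t • (b - a) = s • a + t • b := by
      have hs1 : s = 1 - t := by linarith
      rw [hs1]; module
    have hkey := key_ineq f X hXconv hXclosed hk hA3bd φ hG ha hb ht (by linarith)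
    rw [hcomb] at hkey
    have hs1 : s = 1 - t := by linarith
    rw [← hs1] at hkey
    have hnorm := norm_combo_identity a b hs ht hst
    have h3 : k * (s * ‖a‖ ^ 2) + k * (t * ‖b‖ ^ 2) - k * ‖s • a + t • b‖ ^ 2
        = k * (s * t * ‖b - a‖ ^ 2) := by linear_combination k * hnorm
    nlinarith [hkey, h3]
  refine ⟨hconv, ?_⟩
  have hΩX : Ω ⊆ X := hX ▸ subset_closure
  have hconvΩ : ConvexOn ℝ Ω (fun x => φ x + k * ‖x‖ ^ 2) := hconv.subset hΩX hΩconv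
  have hll := hconvΩ.locallyLipschitzOn hΩopen
  intro x hx
  obtain ⟨K, t, ht, hlip⟩ := hll hx
  exact ⟨K, t, ht, hlip⟩
end
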